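/- Let K = {1,…,k} be partitioned into nonempty parts K_1,…,K_r, let K̄ = {1̄,…,k̄} be a disjoint copy of K with K̄_i the copy of K_i, and let M_{r,k} be the matroid on ground set K ∪ K̄ whose bases are exactly the subsets B ⊆ K ∪ K̄ with |B ∩ (K_i ∪ K̄_i)| = |K_i| for every i = 1,…,r (the direct sum of the uniform matroids U_{k_i, 2k_i}). Let a_0, a_1, …, a_k ∈ ℕ and define the weight w by w_j := a_j for j ∈ K and w_{j̄} := 0 for j̄ ∈ K̄. Then M_{r,k} has a base B with Σ_{j∈B} w_j = a_0 if and only if there exists a subset S ⊆ K with Σ_{j∈S} a_j = a_0. -/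

import Mathlib

/-- The subset-sum reduction for the matroids `M_{r,k}`. The ground set `K ∪ K̄` is modeled
as `Fin k ⊕ Fin k` (`Sum.inl` for `K`, `Sum.inr` for the disjoint copy `K̄`). The partition
of `K` into nonempty parts `K_1,…,K_r` is given by a surjective map `π : Fin k → Fin r`
(`K_i = π⁻¹(i)`), and the bases of `M_{r,k}` are exactly the subsets `B` of the ground set
with `|B ∩ (K_i ∪ K̄_i)| = |K_i|` for every `i`. With weights `w_j := a_j` for `j ∈ K` and
`w_{j̄} := 0` for `j̄ ∈ K̄`, the matroid `M_{r,k}` has a base `B` with `∑_{j∈B} w_j = a_0`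
iff there is a subset `S ⊆ K` with `∑_{j∈S} a_j = a_0`. -/
theorem stmt5 {k r : ℕ} (hr : 0 < r) (π : Fin k → Fin r) (hπ : Function.Surjective π)
    (a : Fin k → ℕ) (a0 : ℕ) :
    (∃ B : Finset (Fin k ⊕ Fin k),
      (∀ i : Fin r,
        (B.filter fun x => Sum.elim π π x = i).card =
          (Finset.univ.filter fun j => π j = i).card) ∧
      ∑ x ∈ B, Sum.elim a (fun _ => 0) x = a0) ↔
    (∃ S : Finset (Fin k), ∑ j ∈ S, a j = a0) := by
  constructor
  · rintro ⟨B, -, hsum⟩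
    refine ⟨B.toLeft, ?_⟩
    rw [← hsum, ← Finset.toLeft_disjSum_toRight (u := B), Finset.sum_disjSum]
    simp [Finset.toLeft_disjSum_toRight]
  · rintro ⟨S, hS⟩
    refine ⟨S.disjSum Sᶜ, fun i => ?_, ?_⟩
    · have : (S.disjSum Sᶜ).filter (fun x => Sum.elim π π x = i) =
        (S.filter fun j => π j = i).disjSum (Sᶜ.filter fun j => π j = i) := by
        ext x
        cases x <;> simp
      rw [this, Finset.card_disjSum,
        ← Finset.card_union_of_disjoint
          (Finset.disjoint_filter_filter disjoint_compl_right),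
        ← Finset.filter_union, Finset.union_compl]
    · rw [Finset.sum_disjSum]
      simpa using hS
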